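/- Let A be a symmetric positive semidefinite K×K matrix with spectral decomposition A = U D Uᵀ (U orthogonal, D diagonal with nonnegative entries), and let λ > 0. Then the matrix S* = (D + λ I)^{-1/2} Uᵀ satisfies the stationarity equation S* A − (S* (S*)ᵀ)⁻¹ S* + λ S* = 0. -/

import Mathlib

open Matrix

theorem stmt_10 (K : ℕ) (A U : Matrix (Fin K) (Fin K) ℝ) (d : Fin K → ℝ)
    (hA : A.PosSemidef) (hU : U * Uᵀ = 1 ∧ Uᵀ * U = 1) (hd : ∀ i, 0 ≤ d i)
    (hdec : A = U * Matrix.diagonal d * Uᵀ)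
    (lam : ℝ) (hlam : 0 < lam) :
    let Sstar := Matrix.diagonal (fun i => 1 / Real.sqrt (d i + lam)) * Uᵀ
    Sstar * A - (Sstar * Sstarᵀ)⁻¹ * Sstar + lam • Sstar = 0 := by
  intro Sstar
  set f : Fin K → ℝ := fun i => 1 / Real.sqrt (d i + lam) with hf
  have hpos : ∀ i, 0 < d i + lam := fun i => by linarith [hd i, hlam]
  have hgram : Sstar * Sstarᵀ = Matrix.diagonal (fun i => f i * f i) := by
    show Matrix.diagonal f * Uᵀ * (Matrix.diagonal f * Uᵀ)ᵀ = _
    rw [transpose_mul, transpose_transpose, diagonal_transpose,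
      Matrix.mul_assoc, ← Matrix.mul_assoc Uᵀ U, hU.2, Matrix.one_mul,
      diagonal_mul_diagonal]
  have hinv : (Sstar * Sstarᵀ)⁻¹ = Matrix.diagonal (fun i => d i + lam) := by
    rw [hgram]
    apply Matrix.inv_eq_left_inv
    rw [diagonal_mul_diagonal]
    convert (Matrix.diagonal_one (n := Fin K)) using 2
    funext i
    have h := hpos i
    have hs : Real.sqrt (d i + lam) ≠ 0 := by positivity
    simp only [hf]
    field_simp
    rw [Real.sq_sqrt h.le]
  have hSA : Sstar * A = Matrix.diagonal (fun i => f i * d i) * Uᵀ := by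
    show Matrix.diagonal f * Uᵀ * A = _
    rw [hdec, ← Matrix.mul_assoc, ← Matrix.mul_assoc,
      Matrix.mul_assoc (Matrix.diagonal f) Uᵀ U, hU.2, Matrix.mul_one,
      diagonal_mul_diagonal]
  have hIS : (Sstar * Sstarᵀ)⁻¹ * Sstar
      = Matrix.diagonal (fun i => (d i + lam) * f i) * Uᵀ := by
    rw [hinv, show Sstar = Matrix.diagonal f * Uᵀ from rfl, ← Matrix.mul_assoc,
      diagonal_mul_diagonal]
  have hdl : (Matrix.diagonal fun i => lam * f i) = lam • Matrix.diagonal f := by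
    rw [← Matrix.diagonal_smul]; rfl
  have hlS : lam • Sstar = Matrix.diagonal (fun i => lam * f i) * Uᵀ := by
    rw [hdl, Matrix.smul_mul]
  rw [hSA, hIS, hlS, ← Matrix.sub_mul, ← Matrix.add_mul]
  have hz : ((Matrix.diagonal fun i => f i * d i)
      - Matrix.diagonal fun i => (d i + lam) * f i)
      + (Matrix.diagonal fun i => lam * f i) = 0 := by
    ext i j
    by_cases h : i = j <;> simp [Matrix.diagonal_apply, h]
    ring
  rw [hz, Matrix.zero_mul]
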